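/- (Proposition 1, adversarial Z loss.) Let μ be a Borel probability measure on ℝ^{d_Z} (the prior P_Z), let G : ℝ^{d_Z} → ℝ^{d_X} (generator) and E : ℝ^{d_X} → ℝ^{d_Z} (encoder) be Borel measurable. Let P = P_{Z,G(Z)} be the pushforward of μ under z ↦ (G(z), z) and Q = P_{E(G(Z)),G(Z)} the pushforward of μ under z ↦ (G(z), E(G(z))), both probability measures on ℝ^{d_X} × ℝ^{d_Z}. Then the discriminator D* = dP/d(P+Q), the Radon–Nikodym derivative of P with respect to P + Q, minimizes the adversarial Z loss L_Z(E,G,D) = ∫ (−log D) dP + ∫ (−log(1−D)) dQ over all measurable D : ℝ^{d_X} × ℝ^{d_Z} → [0,1]: for every such D, L_Z(E,G,D*) ≤ L_Z(E,G,D). -/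

import Mathlib

open MeasureTheory ENNReal

/-- `-log x` for `x ∈ [0,1] ⊆ ℝ≥0∞`, valued in `[0, ∞]`, with the convention
`log 0 = -∞`, i.e. `-log 0 = ∞`. -/
noncomputable def negLog (x : ℝ≥0∞) : ℝ≥0∞ :=
  if x = 0 then ∞ else ENNReal.ofReal (-Real.log x.toReal)


lemma measurable_negLog : Measurable negLog := by
  unfold negLog
  exact Measurable.ite (by simpa using measurableSet_singleton (0:ℝ≥0∞)) measurable_const
    (ENNReal.measurable_ofReal.comp (Real.measurable_log.comp ENNReal.measurable_toReal).neg)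

lemma negLog_one : negLog 1 = 0 := by simp [negLog]

lemma real_gibbs (a d : ℝ) (ha : 0 < a) (ha1 : a < 1) (hd : 0 < d) (hd1 : d < 1) :
    a * (-Real.log a) + (1 - a) * (-Real.log (1 - a)) ≤
      a * (-Real.log d) + (1 - a) * (-Real.log (1 - d)) := by
  have h1a : (0:ℝ) < 1 - a := by linarith
  have h1d : (0:ℝ) < 1 - d := by linarith
  have key := strictConcaveOn_log_Ioi.concaveOn.2 (Set.mem_Ioi.2 (div_pos hd ha))
    (Set.mem_Ioi.2 (div_pos h1d h1a)) ha.le h1a.le (by ring)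
  simp only [smul_eq_mul] at key
  rw [mul_div_cancel₀ _ ha.ne', mul_div_cancel₀ _ h1a.ne'] at key
  rw [show d + (1 - d) = 1 by ring, Real.log_one] at key
  rw [Real.log_div hd.ne' ha.ne', Real.log_div h1d.ne' h1a.ne'] at key
  nlinarith

lemma negLog_key {a d : ℝ≥0∞} (ha : a ≤ 1) (hd : d ≤ 1) :
    a * negLog a + (1 - a) * negLog (1 - a) ≤ a * negLog d + (1 - a) * negLog (1 - d) := by
  rcases eq_or_ne a 0 with rfl | ha0
  · simpa [negLog_one] using zero_le _
  rcases eq_or_ne a 1 with rfl | ha1'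
  · simpa [negLog_one] using zero_le _
  have ha1 : a < 1 := lt_of_le_of_ne ha ha1'
  have haT : a ≠ ∞ := (lt_of_le_of_lt ha one_lt_top).ne
  have h1a0 : 1 - a ≠ 0 := by
    rw [Ne, tsub_eq_zero_iff_le]; exact not_le.2 ha1
  rcases eq_or_ne d 0 with rfl | hd0
  · have : a * negLog 0 = ∞ := by simp [negLog, ha0, haT]
    rw [this]; simp
  rcases eq_or_ne d 1 with rfl | hd1'
  · have : (1 - a) * negLog (1 - 1) = ∞ := by
      simp only [tsub_self]
      simp [negLog, h1a0, ENNReal.mul_top, (lt_of_le_of_lt tsub_le_self one_lt_top).ne]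
    rw [this]; simp
  have hd1 : d < 1 := lt_of_le_of_ne hd hd1'
  have hdT : d ≠ ∞ := (lt_of_le_of_lt hd one_lt_top).ne
  -- real versions
  set A := a.toReal with hA
  set Dd := d.toReal with hDd
  have hA0 : 0 < A := ENNReal.toReal_pos ha0 haT
  have hA1 : A < 1 := by
    have := (ENNReal.toReal_lt_toReal haT one_ne_top).2 ha1
    simpa using this
  have hD0 : 0 < Dd := ENNReal.toReal_pos hd0 hdT
  have hD1 : Dd < 1 := by
    have := (ENNReal.toReal_lt_toReal hdT one_ne_top).2 hd1
    simpa using this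
  have h1a : (1 - a).toReal = 1 - A := by
    rw [ENNReal.toReal_sub_of_le ha one_ne_top]; simp [hA]
  have h1d : (1 - d).toReal = 1 - Dd := by
    rw [ENNReal.toReal_sub_of_le hd one_ne_top]; simp [hDd]
  have h1d0 : 1 - d ≠ 0 := by rw [Ne, tsub_eq_zero_iff_le]; exact not_le.2 hd1
  -- rewrite negLogs
  have e1 : negLog a = ENNReal.ofReal (-Real.log A) := by rw [negLog, if_neg ha0]
  have e2 : negLog (1 - a) = ENNReal.ofReal (-Real.log (1 - A)) := by
    rw [negLog, if_neg h1a0, h1a]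
  have e3 : negLog d = ENNReal.ofReal (-Real.log Dd) := by rw [negLog, if_neg hd0]
  have e4 : negLog (1 - d) = ENNReal.ofReal (-Real.log (1 - Dd)) := by
    rw [negLog, if_neg h1d0, h1d]
  have ea : a = ENNReal.ofReal A := by rw [hA, ENNReal.ofReal_toReal haT]
  have e1a : 1 - a = ENNReal.ofReal (1 - A) := by
    rw [← h1a, ENNReal.ofReal_toReal]
    exact (lt_of_le_of_lt tsub_le_self one_lt_top).ne
  rw [e1, e2, e3, e4, e1a, ea]
  rw [← ENNReal.ofReal_mul hA0.le, ← ENNReal.ofReal_mul (by linarith),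
    ← ENNReal.ofReal_mul hA0.le, ← ENNReal.ofReal_mul (by linarith),
    ← ENNReal.ofReal_add, ← ENNReal.ofReal_add]
  · exact ENNReal.ofReal_le_ofReal (real_gibbs A Dd hA0 hA1 hD0 hD1)
  all_goals
    apply mul_nonneg (by linarith)
      (by simp only [neg_nonneg]; exact Real.log_nonpos (by linarith) (by linarith))

/-- Proposition 1 (adversarial Z loss): with `P` the law of `(G(Z), Z)` and `Q` the law of
`(G(Z), E(G(Z)))` for `Z ∼ μ`, the discriminator `D* = dP/d(P+Q)` minimizes
`L_Z(E,G,D) = ∫ (-log D) dP + ∫ (-log (1-D)) dQ` over measurable `D` valued in `[0,1]`. -/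
theorem adversarial_Z_optimal_discriminator
    (dZ dX : ℕ) (μ : Measure (EuclideanSpace ℝ (Fin dZ))) [IsProbabilityMeasure μ]
    (G : EuclideanSpace ℝ (Fin dZ) → EuclideanSpace ℝ (Fin dX))
    (E : EuclideanSpace ℝ (Fin dX) → EuclideanSpace ℝ (Fin dZ))
    (hG : Measurable G) (hE : Measurable E)
    (P Q : Measure (EuclideanSpace ℝ (Fin dX) × EuclideanSpace ℝ (Fin dZ)))
    (hP : P = μ.map (fun z => (G z, z)))
    (hQ : Q = μ.map (fun z => (G z, E (G z))))
    (D : EuclideanSpace ℝ (Fin dX) × EuclideanSpace ℝ (Fin dZ) → ℝ≥0∞)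
    (hD : Measurable D) (hD1 : ∀ x, D x ≤ 1) :
    ∫⁻ x, negLog (P.rnDeriv (P + Q) x) ∂P
        + ∫⁻ x, negLog (1 - P.rnDeriv (P + Q) x) ∂Q
      ≤ ∫⁻ x, negLog (D x) ∂P + ∫⁻ x, negLog (1 - D x) ∂Q := by
  haveI hPp : IsProbabilityMeasure P :=
    hP ▸ Measure.isProbabilityMeasure_map (hG.prodMk measurable_id).aemeasurable
  haveI hQp : IsProbabilityMeasure Q :=
    hQ ▸ Measure.isProbabilityMeasure_map (hG.prodMk (hE.comp hG)).aemeasurable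
  clear hP hQ
  set ν := P + Q with hν
  have hPν : P ≪ ν := Measure.absolutelyContinuous_of_le (Measure.le_add_right le_rfl)
  have hQν : Q ≪ ν := Measure.absolutelyContinuous_of_le (Measure.le_add_left le_rfl)
  haveI : SigmaFinite ν := by rw [hν]; infer_instance
  set f := P.rnDeriv ν with hfdef
  have hf : Measurable f := Measure.measurable_rnDeriv _ _
  have hsum : (fun x => f x + Q.rnDeriv ν x) =ᵐ[ν] 1 := by
    filter_upwards [Measure.rnDeriv_add P Q ν, Measure.rnDeriv_self ν] with x hx1 hx2
    simp only [Pi.one_apply]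
    rw [← hx2]
    exact hx1.symm
  have hfle : ∀ᵐ x ∂ν, f x ≤ 1 := by
    filter_upwards [hsum] with x hx
    calc f x ≤ f x + Q.rnDeriv ν x := le_self_add
    _ = 1 := hx
  have hg : Q.rnDeriv ν =ᵐ[ν] fun x => 1 - f x := by
    filter_upwards [hsum] with x hx
    have hfx : f x ≠ ∞ := by
      refine (lt_of_le_of_lt ?_ one_lt_top).ne
      calc f x ≤ f x + Q.rnDeriv ν x := le_self_add
      _ = 1 := hx
    exact ENNReal.eq_sub_of_add_eq hfx (by rw [add_comm]; exact hx)
  have mf : Measurable fun x => negLog (f x) := measurable_negLog.comp hf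
  have m1f : Measurable fun x => negLog (1 - f x) :=
    measurable_negLog.comp (measurable_const.sub hf)
  have mD : Measurable fun x => negLog (D x) := measurable_negLog.comp hD
  have m1D : Measurable fun x => negLog (1 - D x) :=
    measurable_negLog.comp (measurable_const.sub hD)
  have E1 : ∫⁻ x, negLog (f x) ∂P = ∫⁻ x, f x * negLog (f x) ∂ν :=
    (lintegral_rnDeriv_mul hPν mf.aemeasurable).symm
  have E2 : ∫⁻ x, negLog (1 - f x) ∂Q = ∫⁻ x, (1 - f x) * negLog (1 - f x) ∂ν := by
    rw [← lintegral_rnDeriv_mul hQν m1f.aemeasurable]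
    refine lintegral_congr_ae ?_
    filter_upwards [hg] with x hx
    rw [hx]
  have E3 : ∫⁻ x, negLog (D x) ∂P = ∫⁻ x, f x * negLog (D x) ∂ν :=
    (lintegral_rnDeriv_mul hPν mD.aemeasurable).symm
  have E4 : ∫⁻ x, negLog (1 - D x) ∂Q = ∫⁻ x, (1 - f x) * negLog (1 - D x) ∂ν := by
    rw [← lintegral_rnDeriv_mul hQν m1D.aemeasurable]
    refine lintegral_congr_ae ?_
    filter_upwards [hg] with x hx
    rw [hx]
  rw [E1, E2, E3, E4, ← lintegral_add_left (show Measurable fun x => f x * negLog (f x) from hf.mul mf),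
    ← lintegral_add_left (show Measurable fun x => f x * negLog (D x) from hf.mul mD)]
  refine lintegral_mono_ae ?_
  filter_upwards [hfle] with x hx
  exact negLog_key hx (hD1 x)
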